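/- arXiv:1705.08766 — 2 statements merged into one kernel-verified Lean document; each statement's English description precedes it below -/
import Mathlib

section
/- Let τ > 1, q ≥ 4, c₂ ≥ 1, and set s_ν = 2^{q+ν}+1, σ_ν = 2^{-(ν+4)}, δ_ν = 4(τ+3)(ν+q)ln 2/s_ν, and ε_ν = c₂ σ_ν^{-τ-3} e^{-s_ν δ_ν} δ_ν^{-3}. Then ε_ν ≤ c₂ (4(τ+3)ln 2)^{-3} (q+ν)^{-3}, and consequently Σ_{ν=0}^∞ ε_ν → 0 as q → ∞. -/
open Real Filter Topology


lemma kam_key (τ c₂ : ℝ) (hτ : 1 < τ) (hc₂ : 1 ≤ c₂) (q ν : ℕ) (hq : 4 ≤ q) :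
    c₂ * ((2:ℝ) ^ (-((ν : ℝ) + 4))) ^ (-τ - 3) *
      Real.exp (-((2:ℝ) ^ (q + ν) + 1) *
        (4 * (τ + 3) * ((ν : ℝ) + (q : ℝ)) * Real.log 2 / ((2:ℝ) ^ (q + ν) + 1))) *
      (4 * (τ + 3) * ((ν : ℝ) + (q : ℝ)) * Real.log 2 / ((2:ℝ) ^ (q + ν) + 1)) ^ (-3 : ℤ)
    ≤ c₂ * (4 * (τ + 3) * Real.log 2) ^ (-3 : ℤ) * (((q : ℝ) + (ν : ℝ)) ^ (-3 : ℤ)) := by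
  have hL : 0 < Real.log 2 := Real.log_pos one_lt_two
  have hT : (4:ℝ) ≤ τ + 3 := by linarith
  have hq' : (4:ℝ) ≤ (q:ℝ) := by exact_mod_cast hq
  have hν : (0:ℝ) ≤ (ν:ℝ) := Nat.cast_nonneg ν
  have ha : (0:ℝ) < (ν:ℝ) + (q:ℝ) := by linarith
  have hS : (0:ℝ) < (2:ℝ) ^ (q + ν) + 1 := by positivity
  set S : ℝ := (2:ℝ) ^ (q + ν) + 1 with hSdef
  set T : ℝ := τ + 3 with hTdef
  set L : ℝ := Real.log 2 with hLdef
  set a : ℝ := (ν:ℝ) + (q:ℝ) with hadef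
  have h1 : -S * (4 * T * a * L / S) = -(4 * T * a * L) := by
    field_simp
  rw [h1]
  have h2 : Real.exp (-(4 * T * a * L)) = (2:ℝ) ^ (-(4 * T * a)) := by
    rw [Real.rpow_def_of_pos (by norm_num : (0:ℝ) < 2)]
    ring_nf
    rw [hLdef]
  rw [h2]
  have h3 : ((2:ℝ) ^ (-((ν : ℝ) + 4))) ^ (-τ - 3) = (2:ℝ) ^ (((ν:ℝ) + 4) * T) := by
    rw [← Real.rpow_mul (by norm_num : (0:ℝ) ≤ 2)]
    congr 1
    rw [hTdef]; ring
  rw [h3]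
  have hδpos : 0 < 4 * T * a * L / S := by positivity
  -- bound on S
  have hSle : S ≤ (2:ℝ) ^ ((q:ℝ) + (ν:ℝ) + 1) := by
    have hc : (2:ℝ) ^ (q + ν) = (2:ℝ) ^ (((q:ℝ) + (ν:ℝ))) := by
      rw [← Real.rpow_natCast 2 (q + ν), Nat.cast_add]
    have h1' : (1:ℝ) ≤ (2:ℝ) ^ ((q:ℝ) + (ν:ℝ)) := by
      have := Real.rpow_le_rpow_of_exponent_le (by norm_num : (1:ℝ) ≤ 2)
        (by positivity : (0:ℝ) ≤ (q:ℝ) + (ν:ℝ))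
      simpa using this
    have h2' : (2:ℝ) ^ ((q:ℝ) + (ν:ℝ) + 1) = (2:ℝ) ^ ((q:ℝ) + (ν:ℝ)) * 2 := by
      rw [Real.rpow_add (by norm_num : (0:ℝ) < 2), Real.rpow_one]
    rw [hSdef, hc, h2']
    linarith
  -- key bound: 2^((ν+4)T) * 2^(-(4Ta)) * S^3 ≤ 1
  have hkey : (2:ℝ) ^ (((ν:ℝ) + 4) * T) * (2:ℝ) ^ (-(4 * T * a)) * S ^ 3 ≤ 1 := by
    have hS3 : S ^ 3 ≤ (2:ℝ) ^ (3 * ((q:ℝ) + (ν:ℝ) + 1)) := by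
      calc S ^ 3 ≤ ((2:ℝ) ^ ((q:ℝ) + (ν:ℝ) + 1)) ^ 3 := by
            exact pow_le_pow_left₀ hS.le hSle 3
        _ = (2:ℝ) ^ (3 * ((q:ℝ) + (ν:ℝ) + 1)) := by
            rw [← Real.rpow_natCast ((2:ℝ) ^ ((q:ℝ) + (ν:ℝ) + 1)) 3,
              ← Real.rpow_mul (by norm_num : (0:ℝ) ≤ 2)]
            norm_num; ring_nf
    calc (2:ℝ) ^ (((ν:ℝ) + 4) * T) * (2:ℝ) ^ (-(4 * T * a)) * S ^ 3
        ≤ (2:ℝ) ^ (((ν:ℝ) + 4) * T) * (2:ℝ) ^ (-(4 * T * a)) *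
            (2:ℝ) ^ (3 * ((q:ℝ) + (ν:ℝ) + 1)) := by
          have : (0:ℝ) < (2:ℝ) ^ (((ν:ℝ) + 4) * T) * (2:ℝ) ^ (-(4 * T * a)) := by positivity
          nlinarith [hS3, this]
      _ = (2:ℝ) ^ ((((ν:ℝ) + 4) * T) + (-(4 * T * a)) + 3 * ((q:ℝ) + (ν:ℝ) + 1)) := by
          rw [← Real.rpow_add (by norm_num : (0:ℝ) < 2), ← Real.rpow_add (by norm_num : (0:ℝ) < 2)]
      _ ≤ 1 := by
          apply Real.rpow_le_one_of_one_le_of_nonpos (by norm_num)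
          rw [hadef]
          nlinarith [hT, hq', hν]
  -- now the final inequality
  have hzp : ∀ x : ℝ, 0 < x → x ^ (-3 : ℤ) = (x ^ 3)⁻¹ := by
    intro x hx
    rw [zpow_neg]
    norm_cast
  rw [hzp _ hδpos, hzp _ (by positivity : (0:ℝ) < 4 * T * L), hzp _ (by linarith : (0:ℝ) < (q:ℝ) + (ν:ℝ))]
  rw [div_pow, inv_div]
  have hrhs : (4 * T * L) ^ 3 * ((q:ℝ) + (ν:ℝ)) ^ 3 = (4 * T * a * L) ^ 3 := by
    rw [hadef]; ring
  have hc₂pos : (0:ℝ) < c₂ := by linarith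
  have hEq : c₂ * ((4 * T * L) ^ 3)⁻¹ * (((q:ℝ) + (ν:ℝ)) ^ 3)⁻¹ = c₂ * ((4 * T * a * L) ^ 3)⁻¹ := by
    rw [mul_assoc, ← mul_inv, hrhs]
  rw [hEq]
  have hdpos : (0:ℝ) < (4 * T * a * L) ^ 3 := by positivity
  calc c₂ * (2:ℝ) ^ (((ν:ℝ) + 4) * T) * (2:ℝ) ^ (-(4 * T * a)) * (S ^ 3 / (4 * T * a * L) ^ 3)
      = c₂ * ((2:ℝ) ^ (((ν:ℝ) + 4) * T) * (2:ℝ) ^ (-(4 * T * a)) * S ^ 3) * ((4 * T * a * L) ^ 3)⁻¹ := by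
        rw [div_eq_mul_inv]; ring
    _ ≤ c₂ * 1 * ((4 * T * a * L) ^ 3)⁻¹ := by
        apply mul_le_mul_of_nonneg_right _ (by positivity)
        exact mul_le_mul_of_nonneg_left hkey hc₂pos.le
    _ = c₂ * ((4 * T * a * L) ^ 3)⁻¹ := by ring

theorem kam_epsilon_estimate (τ c₂ : ℝ) (hτ : 1 < τ) (hc₂ : 1 ≤ c₂) :
    let s : ℕ → ℕ → ℝ := fun q ν => 2 ^ (q + ν) + 1
    let σ : ℕ → ℝ := fun ν => 2 ^ (-((ν : ℝ) + 4))
    let δ : ℕ → ℕ → ℝ := fun q ν => 4 * (τ + 3) * ((ν : ℝ) + (q : ℝ)) * Real.log 2 / s q ν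
    let ε : ℕ → ℕ → ℝ := fun q ν =>
      c₂ * σ ν ^ (-τ - 3) * Real.exp (-(s q ν) * δ q ν) * (δ q ν) ^ (-3 : ℤ)
    (∀ q : ℕ, 4 ≤ q → ∀ ν : ℕ,
        ε q ν ≤ c₂ * (4 * (τ + 3) * Real.log 2) ^ (-3 : ℤ) * (((q : ℝ) + (ν : ℝ)) ^ (-3 : ℤ))) ∧
      Tendsto (fun q : ℕ => ∑' ν : ℕ, ε q ν) atTop (𝓝 0) := by
  intro s σ δ ε
  have hL : 0 < Real.log 2 := Real.log_pos one_lt_two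
  have hT : (0:ℝ) < τ + 3 := by linarith
  have hc₂pos : (0:ℝ) < c₂ := by linarith
  have hpart1 : ∀ q : ℕ, 4 ≤ q → ∀ ν : ℕ,
      ε q ν ≤ c₂ * (4 * (τ + 3) * Real.log 2) ^ (-3 : ℤ) * (((q : ℝ) + (ν : ℝ)) ^ (-3 : ℤ)) := by
    intro q hq ν
    simpa only [s, σ, δ, ε] using kam_key τ c₂ hτ hc₂ q ν hq
  refine ⟨hpart1, ?_⟩
  have hεnn : ∀ q ν : ℕ, 0 ≤ ε q ν := by
    intro q ν
    have hδnn : 0 ≤ δ q ν := by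
      have hs : 0 < s q ν := by
        simp only [s]; positivity
      simp only [δ]
      positivity
    simp only [ε]
    have h1 : (0:ℝ) ≤ σ ν ^ (-τ - 3) := by
      simp only [σ]; positivity
    have h2 : (0:ℝ) ≤ (δ q ν) ^ (-3 : ℤ) := zpow_nonneg hδnn _
    positivity
  set K : ℝ := c₂ * (4 * (τ + 3) * Real.log 2) ^ (-3 : ℤ) with hK
  have hKnn : 0 ≤ K := by
    have : (0:ℝ) < 4 * (τ + 3) * Real.log 2 := by positivity
    have := zpow_nonneg this.le (-3 : ℤ)
    positivity
  set g : ℕ → ℝ := fun n => 1 / (n : ℝ) ^ 3 with hgdef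
  have hg : Summable g := (summable_one_div_nat_pow).2 (by norm_num)
  have hgq : ∀ q : ℕ, Summable (fun ν => K * g (ν + q)) :=
    fun q => (((summable_nat_add_iff q).2 hg).mul_left K)
  have hbound : ∀ q : ℕ, 4 ≤ q → ∀ ν : ℕ, ε q ν ≤ K * g (ν + q) := by
    intro q hq ν
    have h := hpart1 q hq ν
    have : (((q : ℝ) + (ν : ℝ)) ^ (-3 : ℤ)) = g (ν + q) := by
      simp only [g]
      rw [zpow_neg]
      push_cast
      rw [one_div]
      norm_cast
      rw [add_comm]
    rw [this] at h
    exact h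
  have hεsum : ∀ q : ℕ, 4 ≤ q → Summable (ε q) := by
    intro q hq
    exact Summable.of_nonneg_of_le (hεnn q) (hbound q hq) (hgq q)
  have hnn' : ∀ᶠ q : ℕ in atTop, 0 ≤ ∑' ν, ε q ν := by
    filter_upwards with q
    exact tsum_nonneg (hεnn q)
  have hub : ∀ᶠ q : ℕ in atTop, ∑' ν, ε q ν ≤ K * ∑' ν, g (ν + q) := by
    filter_upwards [eventually_ge_atTop 4] with q hq
    calc ∑' ν, ε q ν ≤ ∑' ν, K * g (ν + q) :=
          Summable.tsum_le_tsum (hbound q hq) (hεsum q hq) (hgq q)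
      _ = K * ∑' ν, g (ν + q) := tsum_mul_left
  have hlim : Tendsto (fun q : ℕ => K * ∑' ν, g (ν + q)) atTop (𝓝 0) := by
    have := (tendsto_sum_nat_add g).const_mul K
    simpa using this
  exact squeeze_zero' hnn' hub hlim
end

section
/- Let α > 0, τ > 1, ω a Diophantine number with |kω - l| ≥ α/|k|^τ for all k ≠ 0, l ∈ ℤ, and let P_k be a continuous 2π-periodic function with |P_k(t)| ≤ A e^{-|k|γ} for all t, where k ≠ 0. Then the 2π-periodic solution F_k of F_k' = ikω F_k + P_k given by F_k(t) = e^{ikωt}(∫₀ᵗ P_k e^{-ikωs} ds + (1 - e^{2πikω})^{-1} ∫_{-2π}^0 P_k e^{-ikωs} ds) satisfies |F_k(t)| ≤ (2 + π/2) A e^{-|k|γ} |k|^τ / α for all t ∈ [0, 2π]. -/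
open Real Complex

lemma abs_one_sub_exp_mul_I (θ : ℝ) :
    ‖1 - Complex.exp (θ * Complex.I)‖ = 2 * |Real.sin (θ / 2)| := by
  rw [Complex.exp_mul_I]
  rw [Complex.norm_def, Complex.normSq_apply]
  simp only [Complex.sub_re, Complex.sub_im, Complex.one_re, Complex.one_im,
    Complex.add_re, Complex.add_im, Complex.mul_I_re, Complex.mul_I_im]
  simp only [Complex.cos_ofReal_re, Complex.cos_ofReal_im, Complex.sin_ofReal_re,
    Complex.sin_ofReal_im]
  have h : (1 - (Real.cos θ + -0)) * (1 - (Real.cos θ + -0)) +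
      (0 - (0 + Real.sin θ)) * (0 - (0 + Real.sin θ)) = (2 * |Real.sin (θ/2)|)^2 := by
    have h1 := Real.cos_two_mul (θ/2)
    have h3 := Real.sin_sq_add_cos_sq (θ/2)
    rw [show 2*(θ/2) = θ by ring] at h1
    have h2 := Real.sin_sq_add_cos_sq θ
    rw [mul_pow, _root_.sq_abs]
    nlinarith [h1]
  rw [h]
  exact Real.sqrt_sq (by positivity)

lemma sin_pi_lower (x β : ℝ) (hβ : 0 < β) (hb : ∀ l : ℤ, β ≤ |x - l|) :
    2 * β ≤ |Real.sin (Real.pi * x)| := by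
  set n := round x with hn
  set r := x - n with hr
  have hβr : β ≤ |r| := hb n
  have hr2 : |r| ≤ 1 / 2 := abs_sub_round x
  have hx : Real.pi * x = Real.pi * r + n * Real.pi := by rw [hr]; ring
  have h1 : |Real.sin (Real.pi * x)| = |Real.sin (Real.pi * r)| := by
    have hone : |((-1:ℝ))^n| = 1 := by
      rcases Int.even_or_odd n with h | h
      · rw [h.neg_one_zpow]; simp
      · rw [Odd.neg_one_zpow h]; simp
    rw [hx, Real.sin_add_int_mul_pi, abs_mul, hone, one_mul]
  have h2 : |Real.sin (Real.pi * r)| = Real.sin (Real.pi * |r|) := by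
    rcases abs_cases r with ⟨h, _⟩ | ⟨h, hneg⟩
    · rw [h]
      exact abs_of_nonneg (Real.sin_nonneg_of_nonneg_of_le_pi (by positivity)
        (by nlinarith [Real.pi_pos]))
    · rw [h, mul_neg, Real.sin_neg]
      exact abs_of_nonpos (Real.sin_nonpos_of_nonpos_of_neg_pi_le
        (by nlinarith [Real.pi_pos]) (by nlinarith [Real.pi_pos]))
  rw [h1, h2]
  have := Real.mul_le_sin (x := Real.pi * |r|) (by positivity) (by nlinarith [Real.pi_pos])
  calc 2 * β ≤ 2 * |r| := by linarith
    _ = 2 / Real.pi * (Real.pi * |r|) := by field_simp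
    _ ≤ _ := this

set_option maxHeartbeats 1000000 in
theorem small_divisor_solution_bound (ω α τ A γ : ℝ) (hα : 0 < α) (hτ : 1 < τ)
    (hA : 0 < A) (hγ : 0 < γ)
    (hdioph : ∀ k l : ℤ, k ≠ 0 → α / |(k : ℝ)| ^ τ ≤ |(k : ℝ) * ω - (l : ℝ)|)
    (k : ℤ) (hk : k ≠ 0)
    (P : ℝ → ℂ) (hP : Continuous P) (hper : ∀ t : ℝ, P (t + 2 * Real.pi) = P t)
    (hbound : ∀ t : ℝ, ‖P t‖ ≤ A * Real.exp (-|(k : ℝ)| * γ)) :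
    let F : ℝ → ℂ := fun t =>
      Complex.exp (Complex.I * (k : ℂ) * (ω : ℂ) * (t : ℂ)) *
        ((∫ s in (0 : ℝ)..t, P s * Complex.exp (-(Complex.I * (k : ℂ) * (ω : ℂ) * (s : ℂ)))) +
          (1 - Complex.exp (2 * Real.pi * Complex.I * (k : ℂ) * (ω : ℂ)))⁻¹ *
            ∫ s in (-(2 * Real.pi) : ℝ)..(0 : ℝ),
              P s * Complex.exp (-(Complex.I * (k : ℂ) * (ω : ℂ) * (s : ℂ))))
    ∀ t ∈ Set.Icc (0 : ℝ) (2 * Real.pi),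
      ‖F t‖ ≤
        (2 + Real.pi / 2) * A * Real.exp (-|(k : ℝ)| * γ) * |(k : ℝ)| ^ τ / α := by
  intro F t ht
  obtain ⟨ht0, ht2⟩ := ht
  have hpi := Real.pi_pos
  set M : ℝ := A * Real.exp (-|(k : ℝ)| * γ) with hM
  have hMpos : 0 < M := by positivity
  have hkR : (0:ℝ) < |(k : ℝ)| := by
    simp only [abs_pos, ne_eq, Int.cast_eq_zero]; exact hk
  have hkτ : (0:ℝ) < |(k : ℝ)| ^ τ := Real.rpow_pos_of_pos hkR τ
  set β : ℝ := α / |(k : ℝ)| ^ τ with hβ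
  have hβpos : 0 < β := div_pos hα hkτ
  have hβb : ∀ l : ℤ, β ≤ |(k : ℝ) * ω - l| := fun l => hdioph k l hk
  have hβhalf : β ≤ 1 / 2 :=
    (hβb (round ((k:ℝ) * ω))).trans (abs_sub_round _)
  -- the denominator
  set q : ℂ := Complex.exp (2 * Real.pi * Complex.I * (k : ℂ) * (ω : ℂ)) with hq
  have habsq : 4 * β ≤ ‖1 - q‖ := by
    have hrw : q = Complex.exp ((2 * Real.pi * (k:ℝ) * ω : ℝ) * Complex.I) := by
      rw [hq]; congr 1; push_cast; ring
    rw [hrw, abs_one_sub_exp_mul_I]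
    have harg : 2 * Real.pi * (k:ℝ) * ω / 2 = Real.pi * ((k:ℝ) * ω) := by ring
    rw [harg]
    have := sin_pi_lower ((k:ℝ) * ω) β hβpos hβb
    linarith
  have hqne : (1 : ℂ) - q ≠ 0 := by
    intro h
    rw [h] at habsq
    simp at habsq
    linarith
  have hcbound : ‖(1 - q)⁻¹‖ ≤ 1 / (4 * β) := by
    rw [norm_inv, one_div]
    exact inv_anti₀ (by positivity) habsq
  -- the integrand
  set f : ℝ → ℂ := fun s => P s * Complex.exp (-(Complex.I * (k : ℂ) * (ω : ℂ) * (s : ℂ)))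
    with hf
  have hfc : Continuous f := by
    apply hP.mul
    exact Complex.continuous_exp.comp (by continuity)
  have hfnorm : ∀ s : ℝ, ‖f s‖ ≤ M := by
    intro s
    have hrw : -(Complex.I * (k : ℂ) * (ω : ℂ) * (s : ℂ)) =
        ((-((k:ℝ) * ω * s) : ℝ) : ℂ) * Complex.I := by push_cast; ring
    rw [hf]
    simp only [norm_mul, hrw, Complex.norm_exp_ofReal_mul_I, mul_one]
    exact hbound s
  have hint : ∀ a b : ℝ, IntervalIntegrable f MeasureTheory.volume a b :=
    fun a b => hfc.intervalIntegrable a b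
  have hIbound : ∀ a b : ℝ, a ≤ b → ‖∫ s in a..b, f s‖ ≤ M * (b - a) := by
    intro a b hab
    have := intervalIntegral.norm_integral_le_of_norm_le_const
      (C := M) (f := f) (a := a) (b := b) (fun x _ => hfnorm x)
    rwa [_root_.abs_of_nonneg (by linarith : (0:ℝ) ≤ b - a)] at this
  -- periodicity relation
  have hshift : ∀ s : ℝ, f (s - 2 * Real.pi) = q * f s := by
    intro s
    have hPs : P (s - 2 * Real.pi) = P s := by
      have := hper (s - 2 * Real.pi)
      rw [show s - 2 * Real.pi + 2 * Real.pi = s by ring] at this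
      exact this.symm
    have hexp : Complex.exp (-(Complex.I * (k : ℂ) * (ω : ℂ) * ((s - 2*Real.pi : ℝ) : ℂ))) =
        q * Complex.exp (-(Complex.I * (k : ℂ) * (ω : ℂ) * (s : ℂ))) := by
      rw [hq, ← Complex.exp_add]
      congr 1
      push_cast
      ring
    simp only [hf, hPs, hexp]
    ring
  have hI2 : (∫ s in (-(2 * Real.pi) : ℝ)..(0:ℝ), f s) = q * ∫ s in (0:ℝ)..(2*Real.pi), f s := by
    have := intervalIntegral.integral_comp_sub_right (a := (0:ℝ)) (b := 2*Real.pi)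
      (f := f) (2*Real.pi)
    rw [zero_sub, sub_self] at this
    rw [← this]
    rw [show (∫ x in (0:ℝ)..(2*Real.pi), f (x - 2*Real.pi)) =
        ∫ x in (0:ℝ)..(2*Real.pi), q * f x from intervalIntegral.integral_congr
          (fun x _ => hshift x)]
    rw [intervalIntegral.integral_const_mul]
  set I1 : ℂ := ∫ s in (0:ℝ)..t, f s with hI1
  set J : ℂ := ∫ s in t..(2*Real.pi), f s with hJ
  set Iall : ℂ := ∫ s in (0:ℝ)..(2*Real.pi), f s with hIall
  have hsplit : I1 + J = Iall :=
    intervalIntegral.integral_add_adjacent_intervals (hint 0 t) (hint t (2*Real.pi))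
  set c : ℂ := (1 - q)⁻¹ with hc
  have hcq : c * (1 - q) = 1 := inv_mul_cancel₀ hqne
  -- |exp(I k ω t)| = 1
  have hphase : ‖Complex.exp (Complex.I * (k : ℂ) * (ω : ℂ) * (t : ℂ))‖ = 1 := by
    have hrw : Complex.I * (k : ℂ) * (ω : ℂ) * (t : ℂ) =
        (((k:ℝ) * ω * t : ℝ) : ℂ) * Complex.I := by push_cast; ring
    rw [hrw, Complex.norm_exp_ofReal_mul_I]
  have hFval : ‖F t‖ = ‖I1 + c * (q * Iall)‖ := by
    show ‖_ * _‖ = _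
    rw [norm_mul, hphase, one_mul, hI2]
  have hRHS : (2 + Real.pi / 2) * A * Real.exp (-|(k : ℝ)| * γ) * |(k : ℝ)| ^ τ / α =
      (2 + Real.pi / 2) * M / β := by
    rw [hM, hβ, div_div_eq_mul_div]
    ring
  rw [hFval, hRHS]
  have hIallb : ‖Iall‖ ≤ M * (2 * Real.pi) := by
    have h := hIbound 0 (2*Real.pi) (by linarith)
    rw [sub_zero] at h
    exact h
  have hcb' : ‖c * (q * Iall)‖ ≤ Real.pi / (2 * β) * M := by
    have hqabs : ‖q‖ = 1 := by
      rw [hq]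
      have hrw : 2 * (Real.pi:ℂ) * Complex.I * (k : ℂ) * (ω : ℂ) =
          ((2 * Real.pi * (k:ℝ) * ω : ℝ) : ℂ) * Complex.I := by push_cast; ring
      rw [hrw, Complex.norm_exp_ofReal_mul_I]
    rw [norm_mul, norm_mul, hqabs, one_mul]
    calc ‖c‖ * ‖Iall‖ ≤ 1 / (4*β) * (M * (2*Real.pi)) := by
          apply mul_le_mul hcbound hIallb (by positivity) (by positivity)
      _ = Real.pi / (2 * β) * M := by field_simp; ring
    
  have hfinal : ∀ X : ℂ, ‖X‖ ≤ Real.pi * M + Real.pi / (2 * β) * M →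
      ‖X‖ ≤ (2 + Real.pi / 2) * M / β := by
    intro X hX
    have h1 : Real.pi * M ≤ 2 * M / β := by
      rw [le_div_iff₀ hβpos]
      nlinarith [mul_nonneg (mul_nonneg (sub_nonneg.2 Real.pi_le_four) hMpos.le) hβpos.le,
        mul_nonneg hMpos.le (sub_nonneg.2 hβhalf), Real.pi_le_four]
    have h2 : Real.pi / (2*β) * M = Real.pi / 2 * M / β := by
      field_simp
    calc ‖X‖ ≤ Real.pi * M + Real.pi / (2 * β) * M := hX
      _ ≤ 2 * M / β + Real.pi / 2 * M / β := by rw [h2] at *; linarith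
      _ = (2 + Real.pi / 2) * M / β := by ring
  rcases le_total t Real.pi with hcase | hcase
  · -- t ≤ π : direct estimate
    apply hfinal
    calc ‖I1 + c * (q * Iall)‖ ≤ ‖I1‖ + ‖c * (q * Iall)‖ :=
          norm_add_le _ _
      _ ≤ Real.pi * M + Real.pi / (2 * β) * M := by
          have hI1b : ‖I1‖ ≤ M * t := by
            have h := hIbound 0 t ht0
            rw [sub_zero] at h
            exact h
          have : ‖I1‖ ≤ Real.pi * M := by
            nlinarith [mul_nonneg hMpos.le (sub_nonneg.2 hcase)]
          linarith [hcb']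
  · -- t ≥ π : use the other representation
    have hrepr : I1 + c * (q * Iall) = -J + c * Iall := by
      linear_combination hsplit - Iall * hcq
    rw [hrepr]
    apply hfinal
    have hcI : ‖c * Iall‖ ≤ Real.pi / (2 * β) * M := by
      rw [norm_mul]
      calc ‖c‖ * ‖Iall‖ ≤ 1 / (4*β) * (M * (2*Real.pi)) := by
            apply mul_le_mul hcbound hIallb (by positivity) (by positivity)
        _ = Real.pi / (2 * β) * M := by field_simp; ring
    calc ‖-J + c * Iall‖ ≤ ‖-J‖ + ‖c * Iall‖ :=
          norm_add_le _ _
      _ ≤ Real.pi * M + Real.pi / (2 * β) * M := by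
          have hJb : ‖J‖ ≤ M * (2*Real.pi - t) := hIbound t (2*Real.pi) ht2
          have : ‖-J‖ ≤ Real.pi * M := by
            rw [norm_neg]
            nlinarith [mul_nonneg hMpos.le (sub_nonneg.2 hcase)]
          linarith
end
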